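/- For every matrix A ∈ 𝐔_m, there exists a matrix B ∈ 𝐔^{m+1} (an (m+1)×(m+1) symmetric matrix in 𝐔_{m+1} with total entry sum m+1) whose top-left m×m principal submatrix equals A. -/

import Mathlib

open Matrix Finset

def IsInU {m : ℕ} (A : Matrix (Fin m) (Fin m) ℝ) : Prop :=
  A.IsSymm ∧ (∀ i j, 0 ≤ A i j) ∧
    ∀ α : Finset (Fin m), ∑ i ∈ α, ∑ j ∈ α, A i j ≤ (α.card : ℝ)

def IsInUtop {m : ℕ} (A : Matrix (Fin m) (Fin m) ℝ) : Prop :=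
  IsInU A ∧ ∑ i, ∑ j, A i j = (m : ℝ)

def IsExtremeIn {m : ℕ} (S : Matrix (Fin m) (Fin m) ℝ → Prop)
    (A : Matrix (Fin m) (Fin m) ℝ) : Prop :=
  S A ∧ ∀ A₁ A₂, S A₁ → S A₂ → A₁ + A₂ = (2 : ℝ) • A → A₁ = A ∧ A₂ = A

namespace Stmt19
variable {m : ℕ}

noncomputable section

def ff (A : Matrix (Fin m) (Fin m) ℝ) (s : Finset (Fin m)) : ℝ := ∑ i ∈ s, ∑ j ∈ s, A i j

def gg (A : Matrix (Fin m) (Fin m) ℝ) (s : Finset (Fin m)) : ℝ := (s.card : ℝ) - ff A s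

def hgset (s : Finset (Fin m)) : Finset (Finset (Fin m)) :=
  Finset.univ.filter (fun γ => s ⊆ γ)

lemma hgset_ne (s : Finset (Fin m)) : (hgset s).Nonempty :=
  ⟨Finset.univ, by simp [hgset]⟩

def hg (A : Matrix (Fin m) (Fin m) ℝ) (s : Finset (Fin m)) : ℝ :=
  (hgset s).inf' (hgset_ne s) (gg A)

lemma ff_eq (A : Matrix (Fin m) (Fin m) ℝ) (s : Finset (Fin m)) :
    ff A s = ∑ i : Fin m, (if i ∈ s then (∑ j : Fin m, if j ∈ s then A i j else 0) else 0) := by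
  rw [Finset.sum_ite_mem, Finset.univ_inter, ff]
  refine Finset.sum_congr rfl fun i _ => ?_
  rw [Finset.sum_ite_mem, Finset.univ_inter]

lemma ff_supermod (A : Matrix (Fin m) (Fin m) ℝ) (h0 : ∀ i j, 0 ≤ A i j)
    (s t : Finset (Fin m)) : ff A s + ff A t ≤ ff A (s ∪ t) + ff A (s ∩ t) := by
  rw [ff_eq A s, ff_eq A t, ff_eq A (s ∪ t), ff_eq A (s ∩ t), ← Finset.sum_add_distrib,
    ← Finset.sum_add_distrib]
  refine Finset.sum_le_sum fun i _ => ?_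
  by_cases his : i ∈ s <;> by_cases hit : i ∈ t <;>
    simp only [his, hit, Finset.mem_union, Finset.mem_inter, if_true, if_false, true_or,
      or_true, true_and, and_true, false_and, and_false, or_false, false_or,
      add_zero, zero_add, le_refl]
  · rw [← Finset.sum_add_distrib, ← Finset.sum_add_distrib]
    refine Finset.sum_le_sum fun j _ => ?_
    have := h0 i j
    by_cases hjs : j ∈ s <;> by_cases hjt : j ∈ t <;> simp [hjs, hjt] <;> linarith
  · refine Finset.sum_le_sum fun j _ => ?_
    have := h0 i j
    by_cases hjs : j ∈ s <;> by_cases hjt : j ∈ t <;> simp [hjs, hjt] <;> linarith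
  · refine Finset.sum_le_sum fun j _ => ?_
    have := h0 i j
    by_cases hjs : j ∈ s <;> by_cases hjt : j ∈ t <;> simp [hjs, hjt] <;> linarith


lemma gg_submod (A : Matrix (Fin m) (Fin m) ℝ) (h0 : ∀ i j, 0 ≤ A i j)
    (s t : Finset (Fin m)) : gg A (s ∪ t) + gg A (s ∩ t) ≤ gg A s + gg A t := by
  have h1 := ff_supermod A h0 s t
  have h2 : s.card + t.card = (s ∪ t).card + (s ∩ t).card :=
    (Finset.card_union_add_card_inter s t).symm
  simp only [gg]
  have h2' : (s.card : ℝ) + t.card = ((s ∪ t).card : ℝ) + (s ∩ t).card := by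
    exact_mod_cast congrArg (Nat.cast : ℕ → ℝ) h2
  linarith

lemma hg_le (A : Matrix (Fin m) (Fin m) ℝ) (s : Finset (Fin m)) : hg A s ≤ gg A s := by
  apply Finset.inf'_le
  simp [hgset]

lemma hg_nonneg (A : Matrix (Fin m) (Fin m) ℝ)
    (hc : ∀ α : Finset (Fin m), ∑ i ∈ α, ∑ j ∈ α, A i j ≤ (α.card : ℝ))
    (s : Finset (Fin m)) : 0 ≤ hg A s := by
  apply Finset.le_inf'
  intro γ _
  have := hc γ
  simp only [gg, ff]
  linarith

lemma hg_mono (A : Matrix (Fin m) (Fin m) ℝ) {s t : Finset (Fin m)} (hst : s ⊆ t) :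
    hg A s ≤ hg A t := by
  apply Finset.le_inf'
  intro γ hγ
  apply Finset.inf'_le
  simp only [hgset, Finset.mem_filter, Finset.mem_univ, true_and] at hγ ⊢
  exact hst.trans hγ

lemma hg_submod (A : Matrix (Fin m) (Fin m) ℝ) (h0 : ∀ i j, 0 ≤ A i j)
    (s t : Finset (Fin m)) : hg A (s ∪ t) + hg A (s ∩ t) ≤ hg A s + hg A t := by
  obtain ⟨γs, hγs, hs⟩ := Finset.exists_mem_eq_inf' (hgset_ne s) (gg A)
  obtain ⟨γt, hγt, ht⟩ := Finset.exists_mem_eq_inf' (hgset_ne t) (gg A)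
  simp only [hgset, Finset.mem_filter, Finset.mem_univ, true_and] at hγs hγt
  have h1 : hg A (s ∪ t) ≤ gg A (γs ∪ γt) := by
    apply Finset.inf'_le
    simp only [hgset, Finset.mem_filter, Finset.mem_univ, true_and]
    exact Finset.union_subset_union hγs hγt
  have h2 : hg A (s ∩ t) ≤ gg A (γs ∩ γt) := by
    apply Finset.inf'_le
    simp only [hgset, Finset.mem_filter, Finset.mem_univ, true_and]
    exact Finset.inter_subset_inter hγs hγt
  have h3 := gg_submod A h0 γs γt
  have e1 : hg A s = gg A γs := hs
  have e2 : hg A t = gg A γt := ht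
  rw [e1, e2]
  linarith

lemma hg_empty (A : Matrix (Fin m) (Fin m) ℝ)
    (hc : ∀ α : Finset (Fin m), ∑ i ∈ α, ∑ j ∈ α, A i j ≤ (α.card : ℝ)) :
    hg A (∅ : Finset (Fin m)) = 0 := by
  refine le_antisymm ?_ (hg_nonneg A hc _)
  have := hg_le A (∅ : Finset (Fin m))
  simpa [gg, ff] using this

lemma hg_univ (A : Matrix (Fin m) (Fin m) ℝ) :
    hg A (Finset.univ : Finset (Fin m)) = gg A Finset.univ := by
  refine le_antisymm (hg_le A _) ?_
  apply Finset.le_inf'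
  intro γ hγ
  simp only [hgset, Finset.mem_filter, Finset.mem_univ, true_and] at hγ
  have : γ = Finset.univ := Finset.Subset.antisymm (Finset.subset_univ γ) hγ
  rw [this]

def RR (k : ℕ) : Finset (Fin m) := Finset.univ.filter (fun j => (j : ℕ) < k)

def xx (A : Matrix (Fin m) (Fin m) ℝ) (i : Fin m) : ℝ :=
  hg A (RR ((i : ℕ) + 1)) - hg A (RR (i : ℕ))

lemma RR_mono {k l : ℕ} (h : k ≤ l) : (RR k : Finset (Fin m)) ⊆ RR l := by
  intro j
  simp only [RR, Finset.mem_filter, Finset.mem_univ, true_and]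
  omega

lemma xx_nonneg (A : Matrix (Fin m) (Fin m) ℝ) (i : Fin m) : 0 ≤ xx A i := by
  have := hg_mono A (RR_mono (Nat.le_succ (i : ℕ)) : (RR (i:ℕ) : Finset (Fin m)) ⊆ RR ((i:ℕ)+1))
  simp only [xx]
  linarith

lemma xx_sum_le (A : Matrix (Fin m) (Fin m) ℝ) (h0 : ∀ i j, 0 ≤ A i j)
    (hc : ∀ α : Finset (Fin m), ∑ i ∈ α, ∑ j ∈ α, A i j ≤ (α.card : ℝ))
    (β : Finset (Fin m)) : ∑ i ∈ β, xx A i ≤ hg A β := by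
  induction β using Finset.strongInduction with
  | _ β ih =>
    rcases β.eq_empty_or_nonempty with rfl | hne
    · simpa using hg_nonneg A hc (∅ : Finset (Fin m))
    · set k := β.max' hne with hk
      have hkβ : k ∈ β := β.max'_mem hne
      have hsub : β.erase k ⊂ β := Finset.erase_ssubset hkβ
      have ih' := ih _ hsub
      have hsum : ∑ i ∈ β, xx A i = ∑ i ∈ β.erase k, xx A i + xx A k := by
        rw [Finset.sum_erase_add _ _ hkβ]
      have hunion : β ∪ RR (k : ℕ) = (RR ((k : ℕ) + 1) : Finset (Fin m)) := by
        ext j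
        simp only [Finset.mem_union, RR, Finset.mem_filter, Finset.mem_univ, true_and]
        constructor
        · rintro (hj | hj)
          · have := β.le_max' j hj
            have : (j : ℕ) ≤ (k : ℕ) := this
            omega
          · omega
        · intro hj
          by_cases hjk : j = k
          · left; rw [hjk]; exact hkβ
          · right
            have : (j : ℕ) ≠ (k : ℕ) := fun h => hjk (Fin.ext h)
            omega
      have hinter : β ∩ RR (k : ℕ) = β.erase k := by
        ext j
        simp only [Finset.mem_inter, RR, Finset.mem_filter, Finset.mem_univ, true_and,
          Finset.mem_erase]
        constructor
        · rintro ⟨hj, hjk⟩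
          refine ⟨fun h => ?_, hj⟩
          · rw [h] at hjk; omega
        · rintro ⟨hjk, hj⟩
          refine ⟨hj, ?_⟩
          have := β.le_max' j hj
          have h1 : (j : ℕ) ≤ (k : ℕ) := this
          have : (j : ℕ) ≠ (k : ℕ) := fun h => hjk (Fin.ext h)
          omega
      have hsubmod := hg_submod A h0 β (RR (k : ℕ))
      rw [hunion, hinter] at hsubmod
      rw [hsum]
      have hxk : xx A k = hg A (RR ((k : ℕ) + 1)) - hg A (RR (k : ℕ)) := rfl
      linarith

lemma xx_sum_univ (A : Matrix (Fin m) (Fin m) ℝ)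
    (hc : ∀ α : Finset (Fin m), ∑ i ∈ α, ∑ j ∈ α, A i j ≤ (α.card : ℝ)) :
    ∑ i : Fin m, xx A i = gg A Finset.univ := by
  have h1 : ∑ i : Fin m, xx A i = ∑ k ∈ Finset.range m, (hg A (RR (k + 1)) - hg A (RR k)) :=
    Fin.sum_univ_eq_sum_range (fun k => hg A (RR (k+1)) - hg A (RR k)) m
  rw [h1, Finset.sum_range_sub (fun k => hg A (RR k))]
  have hRm : (RR m : Finset (Fin m)) = Finset.univ := by
    ext j; simp [RR, j.isLt]
  have hR0 : (RR 0 : Finset (Fin m)) = ∅ := by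
    ext j; simp [RR]
  rw [hRm, hR0, hg_univ, hg_empty A hc, sub_zero]


def BB (A : Matrix (Fin m) (Fin m) ℝ) : Matrix (Fin (m + 1)) (Fin (m + 1)) ℝ :=
  fun i j =>
    Fin.lastCases (Fin.lastCases 1 (fun j' => xx A j' / 2) j)
      (fun i' => Fin.lastCases (xx A i' / 2) (fun j' => A i' j') j) i

@[simp] lemma BB_cast_cast (A : Matrix (Fin m) (Fin m) ℝ) (i j : Fin m) :
    BB A i.castSucc j.castSucc = A i j := by
  simp [BB]

@[simp] lemma BB_cast_last (A : Matrix (Fin m) (Fin m) ℝ) (i : Fin m) :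
    BB A i.castSucc (Fin.last m) = xx A i / 2 := by
  simp [BB]

@[simp] lemma BB_last_cast (A : Matrix (Fin m) (Fin m) ℝ) (j : Fin m) :
    BB A (Fin.last m) j.castSucc = xx A j / 2 := by
  simp [BB]

@[simp] lemma BB_last_last (A : Matrix (Fin m) (Fin m) ℝ) :
    BB A (Fin.last m) (Fin.last m) = 1 := by
  simp [BB]

def proj (α : Finset (Fin (m + 1))) : Finset (Fin m) :=
  Finset.univ.filter (fun i : Fin m => i.castSucc ∈ α)

lemma erase_eq_image (α : Finset (Fin (m + 1))) :
    α.erase (Fin.last m) = (proj α).image Fin.castSucc := by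
  ext j
  simp only [Finset.mem_erase, Finset.mem_image, proj, Finset.mem_filter, Finset.mem_univ,
    true_and]
  constructor
  · rintro ⟨hne, hj⟩
    obtain ⟨i, hi⟩ := Fin.exists_castSucc_eq.mpr hne
    exact ⟨i, by rw [hi]; exact hj, hi⟩
  · rintro ⟨i, hi, rfl⟩
    exact ⟨Fin.ne_of_lt (Fin.castSucc_lt_last i), hi⟩

lemma sum_split (α : Finset (Fin (m + 1))) (F : Fin (m + 1) → ℝ) :
    ∑ i ∈ α, F i = ∑ i ∈ proj α, F i.castSucc
      + (if Fin.last m ∈ α then F (Fin.last m) else 0) := by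
  have himg : ∑ i ∈ α.erase (Fin.last m), F i = ∑ i ∈ proj α, F i.castSucc := by
    rw [erase_eq_image, Finset.sum_image (fun a _ b _ h => Fin.castSucc_injective m h)]
  by_cases hl : Fin.last m ∈ α
  · rw [if_pos hl, ← himg, Finset.sum_erase_add α F hl]
  · rw [if_neg hl, add_zero, ← himg, Finset.erase_eq_of_notMem hl]

lemma card_split (α : Finset (Fin (m + 1))) :
    (α.card : ℝ) = ((proj α).card : ℝ) + (if Fin.last m ∈ α then 1 else 0) := by
  have himg : ((α.erase (Fin.last m)).card : ℝ) = ((proj α).card : ℝ) := by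
    rw [erase_eq_image, Finset.card_image_of_injective _ (Fin.castSucc_injective m)]
  by_cases hl : Fin.last m ∈ α
  · rw [if_pos hl]
    have := Finset.card_erase_of_mem hl
    have hpos : 1 ≤ α.card := Finset.card_pos.mpr ⟨_, hl⟩
    have : ((α.erase (Fin.last m)).card : ℝ) = (α.card : ℝ) - 1 := by
      rw [this]; push_cast [hpos]; ring
    linarith [himg, this]
  · rw [if_neg hl, add_zero, ← himg, Finset.erase_eq_of_notMem hl]

lemma double_sum (A : Matrix (Fin m) (Fin m) ℝ) (α : Finset (Fin (m + 1))) :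
    ∑ i ∈ α, ∑ j ∈ α, BB A i j =
      ff A (proj α) + (if Fin.last m ∈ α then (∑ i ∈ proj α, xx A i) + 1 else 0) := by
  rw [sum_split α (fun i => ∑ j ∈ α, BB A i j)]
  have hrow : ∀ i : Fin m, ∑ j ∈ α, BB A i.castSucc j
      = ∑ j ∈ proj α, A i j + (if Fin.last m ∈ α then xx A i / 2 else 0) := by
    intro i
    rw [sum_split α (fun j => BB A i.castSucc j)]
    simp
  have hlast : ∑ j ∈ α, BB A (Fin.last m) j
      = ∑ j ∈ proj α, xx A j / 2 + (if Fin.last m ∈ α then 1 else 0) := by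
    rw [sum_split α (fun j => BB A (Fin.last m) j)]
    simp
  by_cases hl : Fin.last m ∈ α
  · simp only [hl, if_true]
    rw [hlast]
    simp only [hl, if_true]
    have : ∑ i ∈ proj α, (∑ j ∈ proj α, A i j + xx A i / 2)
        = ff A (proj α) + ∑ i ∈ proj α, xx A i / 2 := by
      rw [Finset.sum_add_distrib]; rfl
    calc ∑ i ∈ proj α, ∑ j ∈ α, BB A i.castSucc j + (∑ j ∈ proj α, xx A j / 2 + 1)
        = ∑ i ∈ proj α, (∑ j ∈ proj α, A i j + xx A i / 2)
            + (∑ j ∈ proj α, xx A j / 2 + 1) := by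
          rw [Finset.sum_congr rfl fun i _ => hrow i]
          simp only [hl, if_true]
      _ = ff A (proj α) + (∑ i ∈ proj α, xx A i + 1) := by
          rw [this]
          have : ∑ i ∈ proj α, xx A i / 2 + ∑ j ∈ proj α, xx A j / 2
              = ∑ i ∈ proj α, xx A i := by
            rw [← Finset.sum_add_distrib]
            exact Finset.sum_congr rfl fun i _ => by ring
          linarith
  · simp only [hl, if_false, add_zero]
    rw [Finset.sum_congr rfl fun i _ => hrow i]
    simp only [hl, if_false, add_zero]
    rfl


lemma proj_univ : proj (Finset.univ : Finset (Fin (m + 1))) = (Finset.univ : Finset (Fin m)) := by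
  ext i; simp [proj]

end
end Stmt19

theorem stmt_19 {m : ℕ} (A : Matrix (Fin m) (Fin m) ℝ) (hA : IsInU A) :
    ∃ B : Matrix (Fin (m + 1)) (Fin (m + 1)) ℝ,
      IsInUtop B ∧ ∀ i j : Fin m, B i.castSucc j.castSucc = A i j := by
  obtain ⟨hsymm, h0, hc⟩ := hA
  refine ⟨Stmt19.BB A, ⟨⟨?_, ?_, ?_⟩, ?_⟩, fun i j => Stmt19.BB_cast_cast A i j⟩
  · refine Matrix.IsSymm.ext fun i j => ?_
    rcases Fin.eq_castSucc_or_eq_last i with ⟨i', rfl⟩ | rfl <;>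
      rcases Fin.eq_castSucc_or_eq_last j with ⟨j', rfl⟩ | rfl <;>
      simp [hsymm.apply]
  · intro i j
    rcases Fin.eq_castSucc_or_eq_last i with ⟨i', rfl⟩ | rfl <;>
      rcases Fin.eq_castSucc_or_eq_last j with ⟨j', rfl⟩ | rfl <;>
      simp [h0, Stmt19.xx_nonneg A, le_div_iff₀, Stmt19.xx_nonneg]
  · intro α
    rw [Stmt19.double_sum A α, Stmt19.card_split α]
    by_cases hl : Fin.last m ∈ α
    · simp only [hl, if_true]
      have h1 := Stmt19.xx_sum_le A h0 hc (Stmt19.proj α)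
      have h2 := Stmt19.hg_le A (Stmt19.proj α)
      have h3 : Stmt19.gg A (Stmt19.proj α)
          = ((Stmt19.proj α).card : ℝ) - Stmt19.ff A (Stmt19.proj α) := rfl
      linarith
    · simp only [hl, if_false, add_zero]
      exact hc (Stmt19.proj α)
  · have := Stmt19.double_sum A (Finset.univ : Finset (Fin (m + 1)))
    rw [Stmt19.proj_univ] at this
    simp only [Finset.mem_univ, if_true] at this
    rw [show (∑ i, ∑ j, Stmt19.BB A i j)
        = ∑ i ∈ Finset.univ, ∑ j ∈ Finset.univ, Stmt19.BB A i j from rfl, this]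
    rw [Stmt19.xx_sum_univ A hc]
    have h3 : Stmt19.gg A (Finset.univ : Finset (Fin m))
        = ((Finset.univ : Finset (Fin m)).card : ℝ) - Stmt19.ff A Finset.univ := rfl
    rw [h3]
    simp [Finset.card_univ]
    push_cast
    ring
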